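/- Let S be the unilateral shift on ℓ²(ℕ), let π : B(ℓ²(ℕ)) → Q be the quotient map onto the Calkin algebra, and let s = π(S). Let u ∈ C(S¹, ℂ) be the standard unitary generator u(z) = z, let ι : C(S¹, ℂ) → C([0,1], ℂ) be the unital *-homomorphism ι(f)(t) = f(exp(2πit)), and let φ : C(S¹, ℂ) → Q be the unital *-homomorphism with φ(u) = s. Then there is no *-homomorphism ψ : C([0,1], ℂ) → Q such that ψ ∘ ι = φ. -/

import Mathlib

open scoped unitInterval

/-- The inclusion `Circle → ℂ` as a continuous map; this is the standard unitary
generator `u` of `C(S¹, ℂ)`. -/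
noncomputable def circleGen : C(Circle, ℂ) :=
  ⟨fun z => (z : ℂ), by continuity⟩

/-! ### Auxiliary material -/

noncomputable abbrev Hsp := lp (fun _ : ℕ => ℂ) 2

noncomputable def eb (n : ℕ) : Hsp := lp.single 2 n (1:ℂ)

lemma eb_single (c : ℂ) (i : ℕ) : lp.single 2 i (c : ℂ) = c • eb i := by
  rw [eb, ← lp.single_smul]; norm_num

/-- A continuous linear functional vanishing on all basis vectors is zero. -/
lemma clf_eq_zero (T : Hsp →L[ℂ] ℂ) (h : ∀ n, T (eb n) = 0) (f : Hsp) : T f = 0 := by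
  have h1 : HasSum (fun i : ℕ => lp.single 2 i (f i)) f := lp.hasSum_single (by norm_num) f
  have h2 := h1.mapL T
  have h3 : (fun i : ℕ => T (lp.single 2 i (f i))) = fun _ => (0:ℂ) := by
    funext i; rw [eb_single, map_smul, h i, smul_zero]
  rw [h3] at h2
  exact (h2.unique hasSum_zero)

lemma inner_eb_eb (m n : ℕ) : inner (𝕜 := ℂ) (eb m) (eb n) = (if m = n then (1:ℂ) else 0) := by
  rw [eb, eb, lp.inner_single_left]
  simp [lp.single_apply, eq_comm, Pi.single_apply]

lemma eb_ne_zero (n : ℕ) : eb n ≠ 0 := fun h => by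
  have := inner_eb_eb n n
  rw [h, inner_zero_left] at this
  simp at this

lemma Hsp_nontriv : Nontrivial Hsp := by
  exact ⟨eb 0, 0, eb_ne_zero 0⟩

section Shift
variable {S : Hsp →L[ℂ] Hsp} (hS : ∀ n : ℕ, S (lp.single 2 n 1) = lp.single 2 (n + 1) 1)
include hS

lemma S_eb (n : ℕ) : S (eb n) = eb (n+1) := hS n

lemma S_inner (f g : Hsp) : inner (𝕜 := ℂ) (S f) (S g) = inner (𝕜 := ℂ) f g := by
  have key : ∀ n g, inner (𝕜 := ℂ) (S (eb n)) (S g) = inner (𝕜 := ℂ) (eb n) g := by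
    intro n g
    have := clf_eq_zero (((innerSL ℂ (S (eb n))).comp S) - innerSL ℂ (eb n)) (fun m => by
      simp only [ContinuousLinearMap.sub_apply, ContinuousLinearMap.comp_apply, innerSL_apply_apply,
        S_eb hS, inner_eb_eb]
      simp [Nat.add_right_cancel_iff]) g
    simpa [sub_eq_zero] using this
  have key2 : ∀ f n, inner (𝕜 := ℂ) (S f) (S (eb n)) = inner (𝕜 := ℂ) f (eb n) := by
    intro f n
    rw [← inner_conj_symm, key n f, inner_conj_symm]
  have := clf_eq_zero (((innerSL ℂ (S f)).comp S) - innerSL ℂ f) (fun m => by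
    simp only [ContinuousLinearMap.sub_apply, ContinuousLinearMap.comp_apply, innerSL_apply_apply,
      key2 f m, sub_self]) g
  simpa [sub_eq_zero] using this

lemma S_inj : Function.Injective S := by
  intro x y hxy
  rw [← sub_eq_zero, ← inner_self_eq_zero (𝕜 := ℂ), ← S_inner hS, map_sub, hxy, sub_self,
    inner_zero_left]

lemma S_not_surj : ¬ Function.Surjective S := by
  intro hsurj
  obtain ⟨g, hg⟩ := hsurj (eb 0)
  have h0 : ∀ f, inner (𝕜 := ℂ) (eb 0) (S f) = 0 := by
    intro f
    refine clf_eq_zero ((innerSL ℂ (eb 0)).comp S) (fun m => ?_) f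
    simp [ContinuousLinearMap.comp_apply, S_eb hS, inner_eb_eb]
  have := h0 g
  rw [hg, inner_eb_eb] at this
  simp at this

end Shift

/-- Fredholm alternative for finite-rank perturbations of the identity: purely algebraic. -/
lemma one_add_finiteRank_surjective {E : Type*} [AddCommGroup E] [Module ℂ E]
    (f : E →ₗ[ℂ] E) (hf : FiniteDimensional ℂ (LinearMap.range f))
    (hinj : Function.Injective (LinearMap.id (R := ℂ) (M := E) + f)) :
    Function.Surjective (LinearMap.id (R := ℂ) (M := E) + f) := by
  set W := LinearMap.range f with hW
  have hmem : ∀ w : W, (w : E) + f (w : E) ∈ W := fun w =>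
    W.add_mem w.2 (LinearMap.mem_range_self f (w : E))
  let L : W →ₗ[ℂ] W := LinearMap.codRestrict W
    ((LinearMap.id (R := ℂ) (M := E) + f).comp W.subtype) (fun w => hmem w)
  have hLinj : Function.Injective L := by
    intro a b hab
    have : ((LinearMap.id (R := ℂ) (M := E) + f)) (a : E) =
        ((LinearMap.id (R := ℂ) (M := E) + f)) (b : E) := congrArg Subtype.val hab
    exact Subtype.ext (hinj this)
  have hLsurj : Function.Surjective L :=
    (LinearMap.injective_iff_surjective (f := L)).mp hLinj
  intro y
  obtain ⟨w, hw⟩ := hLsurj ⟨-(f y), W.neg_mem (LinearMap.mem_range_self f y)⟩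
  have hw' : (w : E) + f (w : E) = -(f y) := congrArg Subtype.val hw
  refine ⟨y + (w : E), ?_⟩
  simp only [LinearMap.add_apply, LinearMap.id_apply, map_add]
  rw [hw']
  abel

/-! ### Finite-rank approximation of compact operators -/

noncomputable def Usp (N : ℕ) : Submodule ℂ Hsp :=
  Submodule.span ℂ (Set.range fun i : Fin N => eb i)

instance (N : ℕ) : FiniteDimensional ℂ (Usp N) :=
  FiniteDimensional.span_of_finite ℂ (Set.finite_range _)

noncomputable def Pn (N : ℕ) : Hsp →L[ℂ] Hsp :=
  (Usp N).subtypeL.comp (Submodule.orthogonalProjectionOnto (Usp N))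

lemma Pn_mem (N : ℕ) (x : Hsp) : Pn N x ∈ Usp N := (Submodule.orthogonalProjectionOnto (Usp N) x).2

lemma Pn_norm_le (N : ℕ) (x : Hsp) : ‖Pn N x‖ ≤ ‖x‖ := by
  have h : ‖Pn N x‖ = ‖Submodule.orthogonalProjectionOnto (Usp N) x‖ := rfl
  rw [h]
  calc ‖Submodule.orthogonalProjectionOnto (Usp N) x‖
      ≤ ‖Submodule.orthogonalProjectionOnto (Usp N)‖ * ‖x‖ := (Submodule.orthogonalProjectionOnto (Usp N)).le_opNorm x
    _ ≤ 1 * ‖x‖ := by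
        gcongr; exact Submodule.orthogonalProjectionOnto_norm_le _
    _ = ‖x‖ := one_mul _

lemma Pn_approx (N : ℕ) (x : Hsp) :
    ‖x - Pn N x‖ ≤ ‖x - ∑ i ∈ Finset.range N, lp.single 2 i (x i)‖ := by
  have hmem : (∑ i ∈ Finset.range N, lp.single 2 i (x i)) ∈ Usp N := by
    refine Submodule.sum_mem _ fun i hi => ?_
    rw [eb_single]
    exact Submodule.smul_mem _ _ (Submodule.subset_span ⟨⟨i, Finset.mem_range.mp hi⟩, rfl⟩)
  have hmin := Submodule.starProjection_minimal (U := Usp N) x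
  have : ‖x - Pn N x‖ = ‖x - (Usp N).starProjection x‖ := rfl
  rw [this, hmin]
  exact ciInf_le_of_le ⟨0, fun b ⟨w, hw⟩ => hw ▸ norm_nonneg _⟩
    (⟨_, hmem⟩ : Usp N) le_rfl

lemma Pn_tendsto (x : Hsp) :
    Filter.Tendsto (fun N => ‖x - Pn N x‖) Filter.atTop (nhds 0) := by
  have h1 : HasSum (fun i : ℕ => lp.single 2 i (x i)) x := lp.hasSum_single (by norm_num) x
  have h2 := h1.tendsto_sum_nat
  have h3 : Filter.Tendsto (fun N => ‖x - ∑ i ∈ Finset.range N, lp.single 2 i (x i)‖)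
      Filter.atTop (nhds 0) := by
    have := (tendsto_iff_norm_sub_tendsto_zero).mp h2
    simpa [norm_sub_rev] using this
  exact squeeze_zero (fun N => norm_nonneg _) (fun N => Pn_approx N x) h3

lemma compact_approx' (K : Hsp →L[ℂ] Hsp) (hK : IsCompactOperator K) {ε : ℝ} (hε : 0 < ε) :
    ∃ N : ℕ, ∀ x : Hsp, ‖x‖ ≤ 1 → ‖K x - Pn N (K x)‖ ≤ 3 / 4 * ε := by
  have hC : IsCompact (closure (K '' Metric.closedBall 0 1)) :=
    hK.isCompact_closure_image_closedBall (𝕜₁ := ℂ) 1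
  set C := closure (K '' Metric.closedBall 0 1) with hCdef
  have hcover : C ⊆ ⋃ y ∈ C, Metric.ball y (ε / 4) := fun y hy =>
    Set.mem_biUnion hy (Metric.mem_ball_self (by linarith))
  obtain ⟨t, htC, htfin, htcov⟩ :=
    hC.elim_finite_subcover_image (fun y _ => Metric.isOpen_ball) hcover
  have hev : ∀ᶠ N in Filter.atTop, ∀ y ∈ t, ‖y - Pn N y‖ < ε / 4 := by
    rw [Filter.eventually_all_finite htfin]
    intro y _
    exact (Pn_tendsto y).eventually (Filter.Tendsto.eventually_lt_const (by linarith) Filter.tendsto_id)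
  obtain ⟨N, hN⟩ := hev.exists
  refine ⟨N, fun x hx => ?_⟩
  have hKx : K x ∈ C := subset_closure ⟨x, Metric.mem_closedBall.mpr (by simpa using hx), rfl⟩
  obtain ⟨y, hyt, hy⟩ := Set.mem_iUnion₂.mp (htcov hKx)
  have hy' : ‖K x - y‖ < ε / 4 := by
    rw [← dist_eq_norm]; exact Metric.mem_ball.mp hy
  have key : K x - Pn N (K x) = (K x - y) - Pn N (K x - y) + (y - Pn N y) := by
    rw [map_sub]; abel
  calc ‖K x - Pn N (K x)‖
      ≤ ‖(K x - y) - Pn N (K x - y)‖ + ‖y - Pn N y‖ := by rw [key]; exact norm_add_le _ _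
    _ ≤ (‖K x - y‖ + ‖Pn N (K x - y)‖) + ‖y - Pn N y‖ := by gcongr; exact norm_sub_le _ _
    _ ≤ (ε / 4 + ε / 4) + ε / 4 :=
        add_le_add (add_le_add hy'.le ((Pn_norm_le N _).trans hy'.le)) (hN y hyt).le
    _ = 3 / 4 * ε := by ring

lemma compact_approx (K : Hsp →L[ℂ] Hsp) (hK : IsCompactOperator K) {ε : ℝ} (hε : 0 < ε) :
    ∃ F : Hsp →L[ℂ] Hsp,
      FiniteDimensional ℂ (LinearMap.range (F : Hsp →ₗ[ℂ] Hsp)) ∧ ‖K - F‖ < ε := by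
  obtain ⟨N, hN⟩ := compact_approx' K hK hε
  refine ⟨(Pn N).comp K, ?_, ?_⟩
  · have hle : LinearMap.range ((((Pn N).comp K) : Hsp →L[ℂ] Hsp) : Hsp →ₗ[ℂ] Hsp) ≤ Usp N := by
      rintro _ ⟨x, rfl⟩
      exact Pn_mem N (K x)
    exact Submodule.finiteDimensional_of_le hle
  · have hb : ∀ x : Hsp, ‖(K - (Pn N).comp K) x‖ ≤ 3 / 4 * ε * ‖x‖ := by
      intro x
      rcases eq_or_ne x 0 with rfl | hx
      · simp
      · have hxn : (0:ℝ) < ‖x‖ := norm_pos_iff.mpr hx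
        set u : Hsp := (‖x‖⁻¹ : ℂ) • x with hu
        have hun : ‖u‖ ≤ 1 := by
          rw [hu, norm_smul]
          simp [hxn.ne']
        have h2 : (K - (Pn N).comp K) x = (‖x‖ : ℂ) • ((K - (Pn N).comp K) u) := by
          rw [← map_smul, hu, smul_smul]
          norm_num [hxn.ne']
        rw [h2, norm_smul]
        simp only [Complex.norm_real, norm_norm]
        have := hN u hun
        have h3 : ‖(K - (Pn N).comp K) u‖ = ‖K u - Pn N (K u)‖ := by
          simp [ContinuousLinearMap.sub_apply]
        rw [h3]
        calc ‖x‖ * ‖K u - Pn N (K u)‖ ≤ ‖x‖ * (3/4*ε) := by gcongr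
          _ = 3/4*ε*‖x‖ := by ring
    have hnorm : ‖K - (Pn N).comp K‖ ≤ 3 / 4 * ε :=
      ContinuousLinearMap.opNorm_le_bound _ (by positivity) hb
    linarith

/-- An injective, non-surjective operator is not the sum of an invertible
and a compact operator. -/
lemma not_unit_add_compact {S : Hsp →L[ℂ] Hsp}
    (hinj : Function.Injective S) (hnsurj : ¬ Function.Surjective S)
    (u : (Hsp →L[ℂ] Hsp)ˣ) (Kc : Hsp →L[ℂ] Hsp) (hKc : IsCompactOperator Kc)
    (hsum : S = ↑u + Kc) : False := by
  haveI := Hsp_nontriv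
  have hpos : (0:ℝ) < ‖(↑u⁻¹ : Hsp →L[ℂ] Hsp)‖⁻¹ := by
    rw [inv_pos]; exact Units.norm_pos u⁻¹
  obtain ⟨F, hFfin, hF⟩ := compact_approx Kc hKc hpos
  set B := u.add (Kc - F) hF with hBdef
  have hB : (↑B : Hsp →L[ℂ] Hsp) = ↑u + (Kc - F) := u.val_add _ hF
  have hSB : S = ↑B + F := by rw [hB, hsum]; abel
  set G : Hsp →L[ℂ] Hsp := (↑B⁻¹ : Hsp →L[ℂ] Hsp).comp F with hGdef
  have hfactor : ∀ x : Hsp, (↑B⁻¹ : Hsp →L[ℂ] Hsp) (S x) = x + G x := by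
    intro x
    have : (↑B⁻¹ : Hsp →L[ℂ] Hsp) * S = 1 + G := by
      rw [hSB, hGdef]
      have h1 : (↑B⁻¹ : Hsp →L[ℂ] Hsp) * ↑B = 1 := B.inv_mul
      calc (↑B⁻¹ : Hsp →L[ℂ] Hsp) * (↑B + F) = ↑B⁻¹ * ↑B + ↑B⁻¹ * F := mul_add _ _ _
        _ = 1 + (↑B⁻¹ : Hsp →L[ℂ] Hsp).comp F := by rw [h1]; rfl
    calc (↑B⁻¹ : Hsp →L[ℂ] Hsp) (S x) = ((↑B⁻¹ : Hsp →L[ℂ] Hsp) * S) x := rfl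
      _ = (1 + G) x := by rw [this]
      _ = x + G x := by simp
  have hBS : ∀ x : Hsp, (↑B : Hsp →L[ℂ] Hsp) (x + G x) = S x := by
    intro x
    rw [← hfactor x]
    calc (↑B : Hsp →L[ℂ] Hsp) ((↑B⁻¹ : Hsp →L[ℂ] Hsp) (S x))
        = ((↑B * ↑B⁻¹ : Hsp →L[ℂ] Hsp)) (S x) := rfl
      _ = S x := by rw [B.mul_inv]; simp
  have hGinj : Function.Injective (LinearMap.id (R := ℂ) (M := Hsp) + (G : Hsp →ₗ[ℂ] Hsp)) := by
    intro x y hxy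
    simp only [LinearMap.add_apply, LinearMap.id_apply, ContinuousLinearMap.coe_coe] at hxy
    have : S x = S y := by rw [← hBS x, ← hBS y, hxy]
    exact hinj this
  have hGfin : FiniteDimensional ℂ (LinearMap.range (G : Hsp →ₗ[ℂ] Hsp)) := by
    have : LinearMap.range (G : Hsp →ₗ[ℂ] Hsp) =
        (LinearMap.range (F : Hsp →ₗ[ℂ] Hsp)).map ((↑B⁻¹ : Hsp →L[ℂ] Hsp) : Hsp →ₗ[ℂ] Hsp) := by
      rw [hGdef]
      exact (LinearMap.range_comp _ _)
    rw [this]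
    haveI := hFfin
    exact Module.Finite.map _ _
  have hGsurj := one_add_finiteRank_surjective (G : Hsp →ₗ[ℂ] Hsp) hGfin hGinj
  apply hnsurj
  intro y
  obtain ⟨x, hx⟩ := hGsurj ((↑B⁻¹ : Hsp →L[ℂ] Hsp) y)
  simp only [LinearMap.add_apply, LinearMap.id_apply, ContinuousLinearMap.coe_coe] at hx
  refine ⟨x, ?_⟩
  rw [← hBS x, hx]
  calc (↑B : Hsp →L[ℂ] Hsp) ((↑B⁻¹ : Hsp →L[ℂ] Hsp) y)
      = ((↑B * ↑B⁻¹ : Hsp →L[ℂ] Hsp)) y := rfl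
    _ = y := by rw [B.mul_inv]; simp

/-! ### The exponential function on `C(I, ℂ)` -/

noncomputable def h₀ : C(I, ℂ) :=
  ⟨fun t => (2 * Real.pi * (t : ℝ) : ℂ) * Complex.I, by fun_prop⟩

/-- Evaluation at a point as a ring hom on `C(I,ℂ)`. -/
noncomputable def evalRH (t : I) : C(I, ℂ) →+* ℂ where
  toFun f := f t
  map_one' := rfl
  map_mul' _ _ := rfl
  map_zero' := rfl
  map_add' _ _ := rfl

lemma iota_eq_exp (ι : C(Circle, ℂ) →⋆ₐ[ℂ] C(I, ℂ))
    (hι : ∀ (f : C(Circle, ℂ)) (t : I), ι f t = f (Circle.exp (2 * Real.pi * (t : ℝ)))) :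
    ι circleGen = NormedSpace.exp h₀ := by
  ext t
  rw [hι]
  have he : (NormedSpace.exp h₀ : C(I,ℂ)) t = NormedSpace.exp (h₀ t) := by
    have hc : Continuous (evalRH t) := continuous_eval_const t
    exact NormedSpace.map_exp (evalRH t) hc h₀
  rw [he]
  show (Circle.exp (2 * Real.pi * (t : ℝ)) : ℂ) = _
  rw [Circle.coe_exp, ← Complex.exp_eq_exp_ℂ]
  norm_num [h₀, Complex.ofReal_mul]

/-! ### Main theorem -/

/-- Let `s = θ S` be the image of the unilateral shift `S` in the Calkin algebra `Q`,
let `u ∈ C(S¹, ℂ)` be the standard unitary generator, let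
`ι : C(S¹, ℂ) → C([0,1], ℂ)` be composition with `t ↦ exp (2πit)`, and let
`φ : C(S¹, ℂ) → Q` be the unital ⋆-homomorphism with `φ u = s`.  Then there is no
⋆-homomorphism `ψ : C([0,1], ℂ) → Q` with `ψ ∘ ι = φ`.  Here the Calkin algebra is
represented as any C*-algebra `Q` together with a surjective ⋆-homomorphism
`θ : B(ℓ²(ℕ)) → Q` whose kernel is exactly the ideal of compact operators. -/
theorem no_factorization_through_interval
    (Q : Type) [CStarAlgebra Q]
    (θ : (lp (fun _ : ℕ => ℂ) 2 →L[ℂ] lp (fun _ : ℕ => ℂ) 2) →⋆ₐ[ℂ] Q)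
    (hθ : Function.Surjective θ)
    (hker : ∀ T : lp (fun _ : ℕ => ℂ) 2 →L[ℂ] lp (fun _ : ℕ => ℂ) 2,
      θ T = 0 ↔ IsCompactOperator T)
    (S : lp (fun _ : ℕ => ℂ) 2 →L[ℂ] lp (fun _ : ℕ => ℂ) 2)
    (hS : ∀ n : ℕ, S (lp.single 2 n 1) = lp.single 2 (n + 1) 1)
    (ι : C(Circle, ℂ) →⋆ₐ[ℂ] C(I, ℂ))
    (hι : ∀ (f : C(Circle, ℂ)) (t : I), ι f t = f (Circle.exp (2 * Real.pi * (t : ℝ))))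
    (φ : C(Circle, ℂ) →⋆ₐ[ℂ] Q)
    (hφ : φ circleGen = θ S) :
    ¬ ∃ ψ : C(I, ℂ) →⋆ₙₐ[ℂ] Q, ∀ f : C(Circle, ℂ), ψ (ι f) = φ f := by
  rintro ⟨ψ, hψ⟩
  haveI : Nontrivial (Hsp →L[ℂ] Hsp) := ⟨1, 0, fun h => eb_ne_zero 0 (by
    simpa using ContinuousLinearMap.ext_iff.mp h (eb 0))⟩
  have hψcont : Continuous ψ :=
    AddMonoidHomClass.continuous_of_bound ψ 1
      (fun a => by simpa using NonUnitalStarAlgHom.norm_apply_le ψ a)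
  have hθcont : Continuous θ :=
    AddMonoidHomClass.continuous_of_bound θ 1
      (fun a => by simpa using NonUnitalStarAlgHom.norm_apply_le θ a)
  have hψ1 : ψ (1 : C(I,ℂ)) = 1 := by
    rw [show (1 : C(I,ℂ)) = ι 1 from (map_one ι).symm, hψ, map_one]
  let ψ' : C(I,ℂ) →+* Q :=
    { toFun := ψ, map_one' := hψ1, map_mul' := map_mul ψ,
      map_zero' := map_zero ψ, map_add' := map_add ψ }
  letI : NormedAlgebra ℚ Q := NormedAlgebra.restrictScalars ℚ ℂ Q
  letI : NormedAlgebra ℚ (Hsp →L[ℂ] Hsp) := NormedAlgebra.restrictScalars ℚ ℂ (Hsp →L[ℂ] Hsp)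
  have hs : θ S = ψ (NormedSpace.exp h₀) := by
    rw [← hφ, ← hψ circleGen, iota_eq_exp ι hι]
  have hmap : ψ (NormedSpace.exp h₀) = NormedSpace.exp (ψ h₀) :=
    NormedSpace.map_exp ψ' hψcont h₀
  obtain ⟨T, hT⟩ := hθ (ψ h₀)
  have hθexp : θ (NormedSpace.exp T) = NormedSpace.exp (θ T) :=
    NormedSpace.map_exp θ hθcont T
  have hcpt : IsCompactOperator ⇑(S - NormedSpace.exp T) := by
    refine (hker _).mp ?_
    rw [map_sub, hθexp, hT, hs, hmap, sub_self]
  refine not_unit_add_compact (S_inj hS) (S_not_surj hS)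
    (NormedSpace.isUnit_exp T).unit _ hcpt ?_
  rw [IsUnit.unit_spec]
  abel
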